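/- Let g : ℝ → ℝ be even, subadditive, nonnegative, with g(0) = 0, let B be an n×n real matrix with entries b_{ij}, and let 0 < ε ≤ 1. Set u_i = ∑_{j=1}^n g(b_{ij}), ‖g[B]‖₁ = ∑_{i=1}^n u_i, and T = ∑_{j=1}^n g(∑_{i=1}^n b_{ij}). Suppose there is a row h with u_h ≥ (1 − ε/8)·‖g[B]‖₁, and let a be a real number satisfying (1 − ε/2)·T ≤ a ≤ (1 + ε/2)·T. Then (1 − ε)·u_h ≤ a ≤ (1 + ε)·u_h. -/

import Mathlib

theorem stmt_12 (n : ℕ) (g : ℝ → ℝ)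
    (hg_even : ∀ x, g (-x) = g x)
    (hg_sub : ∀ x y, g (x + y) ≤ g x + g y)
    (hg_nonneg : ∀ x, 0 ≤ g x)
    (hg_zero : g 0 = 0)
    (B : Fin n → Fin n → ℝ) (ε : ℝ) (hε : 0 < ε) (hε1 : ε ≤ 1)
    (u : Fin n → ℝ) (hu : ∀ i, u i = ∑ j, g (B i j))
    (h : Fin n) (hheavy : u h ≥ (1 - ε / 8) * ∑ i, u i)
    (a : ℝ)
    (ha_lo : (1 - ε / 2) * ∑ j, g (∑ i, B i j) ≤ a)
    (ha_hi : a ≤ (1 + ε / 2) * ∑ j, g (∑ i, B i j)) :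
    (1 - ε) * u h ≤ a ∧ a ≤ (1 + ε) * u h := by
  set S := ∑ i, u i with hS
  set T := ∑ j, g (∑ i, B i j) with hT
  have gsum : ∀ (s : Finset (Fin n)) (f : Fin n → ℝ),
      g (∑ i ∈ s, f i) ≤ ∑ i ∈ s, g (f i) := by
    intro s f
    induction s using Finset.cons_induction with
    | empty => simp [hg_zero]
    | cons i s hi ih =>
      rw [Finset.sum_cons, Finset.sum_cons]
      calc g (f i + ∑ j ∈ s, f j) ≤ g (f i) + g (∑ j ∈ s, f j) := hg_sub _ _
        _ ≤ _ := by linarith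
  have hT_le : T ≤ S := by
    rw [hT, hS]
    simp only [hu]
    rw [Finset.sum_comm]
    exact Finset.sum_le_sum fun j _ => gsum _ _
  have hT_nonneg : 0 ≤ T := Finset.sum_nonneg fun j _ => hg_nonneg _
  have huh_nonneg : 0 ≤ u h := by
    rw [hu]; exact Finset.sum_nonneg fun j _ => hg_nonneg _
  have hD : 0 ≤ S - u h := by
    have := Finset.single_le_sum (f := u) (fun i _ => by
      rw [hu]; exact Finset.sum_nonneg fun j _ => hg_nonneg _) (Finset.mem_univ h)
    linarith
  have key : u h ≤ T + (S - u h) := by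
    have h1 : ∀ j, g (B h j) ≤ g (∑ i, B i j) + ∑ i ∈ Finset.univ.erase h, g (B i j) := by
      intro j
      have hsplit : B h j = (∑ i, B i j) + (- ∑ i ∈ Finset.univ.erase h, B i j) := by
        rw [← Finset.add_sum_erase _ _ (Finset.mem_univ h)]; ring
      calc g (B h j)
          ≤ g (∑ i, B i j) + g (- ∑ i ∈ Finset.univ.erase h, B i j) := by
            nth_rewrite 1 [hsplit]; exact hg_sub _ _
        _ ≤ _ := by
            rw [hg_even]
            exact add_le_add_right (gsum _ _) _
    have h2 : u h ≤ T + ∑ j, ∑ i ∈ Finset.univ.erase h, g (B i j) := by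
      rw [hu, hT, ← Finset.sum_add_distrib]
      exact Finset.sum_le_sum fun j _ => h1 j
    have h3 : ∑ j, ∑ i ∈ Finset.univ.erase h, g (B i j) = S - u h := by
      rw [Finset.sum_comm, hS]
      rw [Finset.sum_erase_eq_sub (Finset.mem_univ h)]
      simp only [hu]
    linarith [h2, h3.le, h3.ge]
  constructor
  · nlinarith [key, hT_le, hheavy, ha_lo, hT_nonneg, huh_nonneg, hD,
      mul_nonneg hε.le hD, mul_nonneg hε.le huh_nonneg,
      mul_nonneg (mul_nonneg hε.le hε.le) huh_nonneg,
      mul_nonneg (mul_nonneg hε.le hε.le) hD]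
  · nlinarith [key, hT_le, hheavy, ha_hi, hT_nonneg, huh_nonneg, hD,
      mul_nonneg hε.le hD, mul_nonneg hε.le huh_nonneg,
      mul_nonneg (mul_nonneg hε.le hε.le) huh_nonneg,
      mul_nonneg (mul_nonneg hε.le hε.le) hD]
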